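/- Let X be a Banach space with a projectional skeleton 𝔰 = {P_s : s ∈ Γ} with sup_s ‖P_s‖ ≤ r. Then D(𝔰) := ⋃_{s∈Γ} P_s* X* is an r-norming linear subspace of X*. -/

import Mathlib

/-- A projectional skeleton in a Banach space `X`: a family of bounded projections
`P s`, indexed by an up-directed partial order `Γ`, such that `X = ⋃ₛ im (P s)`,
each image is separable, `P s = P s ∘ P t = P t ∘ P s` for `s ≤ t`, and every
increasing sequence has a supremum `t` with `im (P t) = closure (⋃ₙ im (P sₙ))`. -/
structure ProjSkeleton (X : Type*) [NormedAddCommGroup X] [NormedSpace ℝ X]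
    (Γ : Type*) [PartialOrder Γ] where
  P : Γ → X →L[ℝ] X
  directed : ∀ s t : Γ, ∃ u, s ≤ u ∧ t ≤ u
  idem : ∀ s, (P s).comp (P s) = P s
  covers : ∀ x : X, ∃ s, P s x = x
  sep : ∀ s, TopologicalSpace.IsSeparable (Set.range (P s))
  comp_of_le : ∀ s t, s ≤ t → (P s).comp (P t) = P s ∧ (P t).comp (P s) = P s
  lub_exists : ∀ u : ℕ → Γ, StrictMono u → ∃ t, IsLUB (Set.range u) t
  range_lub : ∀ u : ℕ → Γ, StrictMono u → ∀ t, IsLUB (Set.range u) t →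
    Set.range (P t) = closure (⋃ n, Set.range (P (u n)))

/-- for a projectional skeleton with `sup ‖P s‖ ≤ r`, the space
`D(𝔰) = ⋃ₛ P s* X*` (i.e. all functionals of the form `φ ∘ P s`) is an
`r`-norming linear subspace of `X*`. -/
theorem statement6 {X : Type*} [NormedAddCommGroup X] [NormedSpace ℝ X] [CompleteSpace X]
    {Γ : Type*} [PartialOrder Γ] (Sk : ProjSkeleton X Γ)
    (r : ℝ) (hbound : ∀ s, ‖Sk.P s‖ ≤ r)
    (D : Set (X →L[ℝ] ℝ))
    (hD : D = {ψ : X →L[ℝ] ℝ | ∃ s : Γ, ∃ φ : X →L[ℝ] ℝ, ψ = φ.comp (Sk.P s)}) :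
    (∀ φ ∈ D, ∀ ψ ∈ D, φ + ψ ∈ D) ∧
    (∀ c : ℝ, ∀ φ ∈ D, c • φ ∈ D) ∧
    (∀ x : X, ‖x‖ ≤ r * sSup {t : ℝ | ∃ φ ∈ D, φ ≠ 0 ∧ t = |φ x| / ‖φ‖}) := by
  subst hD
  refine ⟨?_, ?_, ?_⟩
  · rintro φ ⟨s, f, rfl⟩ ψ ⟨t, g, rfl⟩
    obtain ⟨u, hsu, htu⟩ := Sk.directed s t
    refine ⟨u, f.comp (Sk.P s) + g.comp (Sk.P t), ?_⟩
    ext x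
    have h1 := DFunLike.congr_fun (Sk.comp_of_le s u hsu).1 x
    have h2 := DFunLike.congr_fun (Sk.comp_of_le t u htu).1 x
    simp only [ContinuousLinearMap.comp_apply] at h1 h2 ⊢
    simp [h1, h2]
  · rintro c φ ⟨s, f, rfl⟩
    exact ⟨s, c • f, by ext x; simp⟩
  · intro x
    -- bounded above
    have hbdd : BddAbove {t : ℝ | ∃ φ ∈ {ψ : X →L[ℝ] ℝ | ∃ s : Γ, ∃ f : X →L[ℝ] ℝ,
        ψ = f.comp (Sk.P s)}, φ ≠ 0 ∧ t = |φ x| / ‖φ‖} := by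
      refine ⟨‖x‖, ?_⟩
      rintro t ⟨φ, _, hφ0, rfl⟩
      have hpos : 0 < ‖φ‖ := norm_pos_iff.mpr hφ0
      rw [div_le_iff₀ hpos]
      calc |φ x| = ‖φ x‖ := rfl
        _ ≤ ‖φ‖ * ‖x‖ := φ.le_opNorm x
        _ = ‖x‖ * ‖φ‖ := mul_comm _ _
    by_cases hx : x = 0
    · subst hx
      simp only [norm_zero]
      obtain ⟨s, _⟩ := Sk.covers 0
      have hr : 0 ≤ r := le_trans (norm_nonneg _) (hbound s)
      rcases Set.eq_empty_or_nonempty {t : ℝ | ∃ φ ∈ {ψ : X →L[ℝ] ℝ | ∃ s : Γ, ∃ f : X →L[ℝ] ℝ,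
          ψ = f.comp (Sk.P s)}, φ ≠ 0 ∧ t = |φ (0 : X)| / ‖φ‖} with he | hne
      · rw [he, Real.sSup_empty, mul_zero]
      · obtain ⟨t, φ, hφ, hφ0, rfl⟩ := hne
        have : (0 : ℝ) ≤ sSup {t : ℝ | ∃ φ ∈ {ψ : X →L[ℝ] ℝ | ∃ s : Γ, ∃ f : X →L[ℝ] ℝ,
            ψ = f.comp (Sk.P s)}, φ ≠ 0 ∧ t = |φ (0 : X)| / ‖φ‖} :=
          le_trans (by positivity) (le_csSup hbdd ⟨φ, hφ, hφ0, rfl⟩)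
        positivity
    · obtain ⟨s, hs⟩ := Sk.covers x
      obtain ⟨g, hg1, hgx⟩ := exists_dual_vector ℝ x (norm_ne_zero_iff.mpr hx)
      set φ : X →L[ℝ] ℝ := g.comp (Sk.P s) with hφdef
      have hφx : φ x = ‖x‖ := by
        simp only [hφdef, ContinuousLinearMap.comp_apply, hs]
        simpa using hgx
      have hφ0 : φ ≠ 0 := by
        intro h
        rw [h] at hφx
        simp at hφx
        exact hx (norm_eq_zero.mp hφx.symm)
      have hφpos : 0 < ‖φ‖ := norm_pos_iff.mpr hφ0
      have hφr : ‖φ‖ ≤ r := by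
        calc ‖φ‖ ≤ ‖g‖ * ‖Sk.P s‖ := ContinuousLinearMap.opNorm_comp_le _ _
          _ = ‖Sk.P s‖ := by rw [hg1, one_mul]
          _ ≤ r := hbound s
      have hrpos : 0 < r := lt_of_lt_of_le hφpos hφr
      have hmem : ‖x‖ / ‖φ‖ ∈ {t : ℝ | ∃ φ ∈ {ψ : X →L[ℝ] ℝ | ∃ s : Γ, ∃ f : X →L[ℝ] ℝ,
          ψ = f.comp (Sk.P s)}, φ ≠ 0 ∧ t = |φ x| / ‖φ‖} := by
        refine ⟨φ, ⟨s, g, rfl⟩, hφ0, ?_⟩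
        rw [hφx, abs_of_nonneg (norm_nonneg x)]
      have h1 : ‖x‖ / r ≤ ‖x‖ / ‖φ‖ :=
        div_le_div_of_nonneg_left (norm_nonneg x) hφpos hφr
      have h2 : ‖x‖ / ‖φ‖ ≤ sSup _ := le_csSup hbdd hmem
      calc ‖x‖ = r * (‖x‖ / r) := by field_simp
        _ ≤ r * sSup _ := by
            exact mul_le_mul_of_nonneg_left (le_trans h1 h2) hrpos.le
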